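/- Let r, a > 0 and set r_s = r a (1 - s). If f satisfies the second order ODE f''(t) + (r a r_{1-t} (1 - cos r_{1-t}) / (2 - 2 cos r_{1-t} - r_{1-t} sin r_{1-t})) f'(t) + (r² a² (1 - cos r_{1-t}) / (2 - 2 cos r_{1-t} - r_{1-t} sin r_{1-t})) f(t) = 0 on an interval where the denominator is nonzero, then h(t) := (r_{1-t} cos(r_{1-t}/2) - 2 sin(r_{1-t}/2)) f(t) satisfies h''(t) + (r²a²/4) h(t) = 0. -/

import Mathlib

open Set Real

theorem trig_ode_transformation (r a : ℝ) (hr : 0 < r) (ha : 0 < a)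
    (I : Set ℝ) (hI : IsOpen I)
    (f f' f'' : ℝ → ℝ)
    (hf : ∀ t ∈ I, HasDerivAt f (f' t) t)
    (hf' : ∀ t ∈ I, HasDerivAt f' (f'' t) t)
    (hdenom : ∀ t ∈ I,
      2 - 2 * Real.cos (r * a * (1 - (1 - t))) -
        (r * a * (1 - (1 - t))) * Real.sin (r * a * (1 - (1 - t))) ≠ 0)
    (hode : ∀ t ∈ I,
      f'' t
        + (r * a * (r * a * (1 - (1 - t))) * (1 - Real.cos (r * a * (1 - (1 - t)))) /
            (2 - 2 * Real.cos (r * a * (1 - (1 - t))) -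
              (r * a * (1 - (1 - t))) * Real.sin (r * a * (1 - (1 - t))))) * f' t
        + (r ^ 2 * a ^ 2 * (1 - Real.cos (r * a * (1 - (1 - t)))) /
            (2 - 2 * Real.cos (r * a * (1 - (1 - t))) -
              (r * a * (1 - (1 - t))) * Real.sin (r * a * (1 - (1 - t))))) * f t = 0) :
    ∀ t ∈ I,
      deriv (deriv (fun s =>
        ((r * a * (1 - (1 - s))) * Real.cos ((r * a * (1 - (1 - s))) / 2)
          - 2 * Real.sin ((r * a * (1 - (1 - s))) / 2)) * f s)) t
        + (r ^ 2 * a ^ 2 / 4) *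
          (((r * a * (1 - (1 - t))) * Real.cos ((r * a * (1 - (1 - t))) / 2)
            - 2 * Real.sin ((r * a * (1 - (1 - t))) / 2)) * f t) = 0 := by
  intro t ht
  simp only [sub_sub_cancel] at hdenom hode ⊢
  set c := r * a with hc
  -- derivative of the weight w(s) = c s cos(cs/2) - 2 sin(cs/2)
  have hlin : ∀ s : ℝ, HasDerivAt (fun s : ℝ => c * s) c s := by
    intro s; simpa using (hasDerivAt_id s).const_mul c
  have hhalf : ∀ s : ℝ, HasDerivAt (fun s : ℝ => c * s / 2) (c / 2) s :=
    fun s => (hlin s).div_const 2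
  have hw : ∀ s : ℝ, HasDerivAt
      (fun s => c * s * Real.cos (c * s / 2) - 2 * Real.sin (c * s / 2))
      (-(c ^ 2 * s / 2) * Real.sin (c * s / 2)) s := by
    intro s
    have h1 := (hlin s).mul ((hhalf s).cos)
    have h2 := ((hhalf s).sin).const_mul 2
    exact (h1.sub h2).congr_deriv (by ring)
  have hw' : ∀ s : ℝ, HasDerivAt
      (fun s => -(c ^ 2 * s / 2) * Real.sin (c * s / 2))
      (-(c ^ 2 / 2) * Real.sin (c * s / 2) - (c ^ 3 * s / 4) * Real.cos (c * s / 2)) s := by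
    intro s
    have h1 : HasDerivAt (fun s : ℝ => -(c ^ 2 * s / 2)) (-(c ^ 2 / 2)) s := by
      have h0 := (hasDerivAt_id s).const_mul (-(c ^ 2) / 2)
      exact (h0.congr_deriv (by ring)).congr_of_eventuallyEq
        (Filter.Eventually.of_forall fun x => by simp only [id]; ring)
    have := h1.mul ((hhalf s).sin)
    exact this.congr_deriv (by ring)
  -- first derivative of h
  have hg : ∀ s ∈ I, HasDerivAt
      (fun s => (c * s * Real.cos (c * s / 2) - 2 * Real.sin (c * s / 2)) * f s)
      (-(c ^ 2 * s / 2) * Real.sin (c * s / 2) * f s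
        + (c * s * Real.cos (c * s / 2) - 2 * Real.sin (c * s / 2)) * f' s) s :=
    fun s hs => (hw s).mul (hf s hs)
  -- second derivative
  have hg2 : HasDerivAt
      (fun s => -(c ^ 2 * s / 2) * Real.sin (c * s / 2) * f s
        + (c * s * Real.cos (c * s / 2) - 2 * Real.sin (c * s / 2)) * f' s)
      ((-(c ^ 2 / 2) * Real.sin (c * t / 2) - (c ^ 3 * t / 4) * Real.cos (c * t / 2)) * f t
        + -(c ^ 2 * t / 2) * Real.sin (c * t / 2) * f' t
        + (-(c ^ 2 * t / 2) * Real.sin (c * t / 2) * f' t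
          + (c * t * Real.cos (c * t / 2) - 2 * Real.sin (c * t / 2)) * f'' t)) t :=
    ((hw' t).mul (hf t ht)).add ((hw t).mul (hf' t ht))
  have heq : deriv (fun s => (c * s * Real.cos (c * s / 2) - 2 * Real.sin (c * s / 2)) * f s)
      =ᶠ[nhds t] (fun s => -(c ^ 2 * s / 2) * Real.sin (c * s / 2) * f s
        + (c * s * Real.cos (c * s / 2) - 2 * Real.sin (c * s / 2)) * f' s) := by
    filter_upwards [hI.mem_nhds ht] with s hs using (hg s hs).deriv
  have hdd := hg2.congr_of_eventuallyEq heq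
  rw [hdd.deriv]
  -- algebra
  set S := Real.sin (c * t / 2) with hS
  set C := Real.cos (c * t / 2) with hC
  have hpy : S ^ 2 + C ^ 2 = 1 := Real.sin_sq_add_cos_sq _
  have hcos : Real.cos (c * t) = 1 - 2 * S ^ 2 := by
    have : c * t = 2 * (c * t / 2) := by ring
    rw [this, Real.cos_two_mul, ← hC]
    nlinarith [hpy]
  have hsin : Real.sin (c * t) = 2 * S * C := by
    have : c * t = 2 * (c * t / 2) := by ring
    rw [this, Real.sin_two_mul]
  have hD := hdenom t ht
  have key2 : f'' t * (2 - 2 * Real.cos (c * t) - c * t * Real.sin (c * t))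
      + c * (c * t) * (1 - Real.cos (c * t)) * f' t
      + r ^ 2 * a ^ 2 * (1 - Real.cos (c * t)) * f t = 0 := by
    have := hode t ht
    field_simp [show (1 - Real.cos (c * t)) * 2 - c * t * Real.sin (c * t) ≠ 0 from
      fun h => hD (by linarith)] at this
    linarith [this]
  rw [hcos, hsin] at key2
  have hra : r ^ 2 * a ^ 2 = c ^ 2 := by rw [hc]; ring
  rw [hra] at key2 ⊢
  have hSne : S ≠ 0 := by
    intro h
    apply hD
    rw [hcos, hsin, h]
    ring
  have hfact : (-(2 * S)) * ((-(c ^ 2 / 2) * S - c ^ 3 * t / 4 * C) * f t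
      + -(c ^ 2 * t / 2) * S * f' t
      + (-(c ^ 2 * t / 2) * S * f' t + (c * t * C - 2 * S) * f'' t)
      + c ^ 2 / 4 * ((c * t * C - 2 * S) * f t)) = 0 := by
    linear_combination key2
  have h2S : (-(2 * S)) ≠ 0 := by simpa using hSne
  have := (mul_eq_zero.mp hfact).resolve_left h2S
  linarith [this]
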